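/- For every μ ∈ ℂ with μ ≠ 0, let F_μ = (x₀²x₁ + x₁²x₂ + x₂²x₀ − 3x₀x₁x₂)² + μ·x₀x₁x₂(x₀−x₁)(x₁−x₂)(x₂−x₀) ∈ ℂ[x₀,x₁,x₂]. Then F_μ and all of its partial derivatives of order 1 and 2 vanish at the point (1,1,1), and at least one partial derivative of F_μ of order 3 does not vanish at (1,1,1); that is, (1:1:1) is a point of multiplicity exactly 3 of the sextic curve {F_μ = 0} ⊂ ℙ²(ℂ). -/

import Mathlib

set_option maxHeartbeats 1600000


open MvPolynomial

/-- The family of homogeneous sextics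
`F_μ = (x₀²x₁ + x₁²x₂ + x₂²x₀ − 3x₀x₁x₂)² + μ·x₀x₁x₂(x₀−x₁)(x₁−x₂)(x₂−x₀)`. -/
noncomputable def Fmu (μ : ℂ) : MvPolynomial (Fin 3) ℂ :=
  (X 0 ^ 2 * X 1 + X 1 ^ 2 * X 2 + X 2 ^ 2 * X 0 - 3 * (X 0 * X 1 * X 2)) ^ 2 +
    C μ * (X 0 * X 1 * X 2 * (X 0 - X 1) * (X 1 - X 2) * (X 2 - X 0))

lemma pd3 (i : Fin 3) : pderiv i (3 : MvPolynomial (Fin 3) ℂ) = 0 := by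
  rw [show (3 : MvPolynomial (Fin 3) ℂ) = C 3 by simp [map_ofNat]]
  exact pderiv_C

/-- For every `μ ≠ 0`, the sextic `F_μ` and all of its partial derivatives of order 1 and 2
vanish at `(1,1,1)`, while some third-order partial derivative does not vanish there:
`(1:1:1)` is a point of multiplicity exactly 3 of the curve `{F_μ = 0}`. -/
theorem multiplicity_three_at_111 (μ : ℂ) (hμ : μ ≠ 0) :
    MvPolynomial.eval ![1, 1, 1] (Fmu μ) = 0 ∧
    (∀ i : Fin 3, MvPolynomial.eval ![1, 1, 1] (MvPolynomial.pderiv i (Fmu μ)) = 0) ∧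
    (∀ i j : Fin 3,
      MvPolynomial.eval ![1, 1, 1] (MvPolynomial.pderiv j (MvPolynomial.pderiv i (Fmu μ))) = 0) ∧
    (∃ i j k : Fin 3,
      MvPolynomial.eval ![1, 1, 1]
        (MvPolynomial.pderiv k (MvPolynomial.pderiv j (MvPolynomial.pderiv i (Fmu μ)))) ≠ 0) := by
  refine ⟨by norm_num [Fmu, Matrix.cons_val_two], ?_, ?_, 0, 0, 1, ?_⟩
  · intro i
    fin_cases i <;>
      · simp [Fmu, pderiv_mul, pderiv_pow, pd3]
        first | ring1 | norm_num | tauto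
  · intro i j
    fin_cases i <;> fin_cases j <;>
      · simp [Fmu, pderiv_mul, pderiv_pow, pd3]
        first | ring1 | norm_num | tauto
  · have h : MvPolynomial.eval ![1, 1, 1]
        (MvPolynomial.pderiv 1 (MvPolynomial.pderiv 0 (MvPolynomial.pderiv 0 (Fmu μ)))) = -2 * μ := by
      simp [Fmu, pderiv_mul, pderiv_pow, pd3]
      ring
    rw [h]
    simpa using hμ
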